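/- With the same hypotheses (φ unital positive sending C[0,1]_{(a,k)} to C[0,1]_{(b,k)}, {X₁,…,Xₙ} a partition of [0,1] into connected Borel sets with 0 ∈ X₁, 1 ∈ Xₙ, μ₀ and μ₁ the induced measures at 0 and 1), one has μ₀(X₁) = (b/(b+k)) μ₁(X₁) + (a+k)/(b+k) and μ₀(Xₙ) = (b/(b+k)) μ₁(Xₙ) − a/(b+k). -/

import Mathlib

open ContinuousMap MeasureTheory
open scoped ENNReal NNReal

theorem stmt9 (a k b : ℕ) (ha : 0 < a) (hk : 0 < k) (hb : 0 < b)
    (φ : C(unitInterval, ℝ) →ₗ[ℝ] C(unitInterval, ℝ))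
    (hunital : φ 1 = 1)
    (hpos : ∀ f : C(unitInterval, ℝ), (∀ x, 0 ≤ f x) → ∀ x, 0 ≤ φ f x)
    (hsub : ∀ f : C(unitInterval, ℝ),
      f 0 = (a : ℝ) / ((a : ℝ) + (k : ℝ)) * f 1 →
      φ f 0 = (b : ℝ) / ((b : ℝ) + (k : ℝ)) * φ f 1)
    (μ₀ μ₁ : Measure unitInterval)
    [IsProbabilityMeasure μ₀] [IsProbabilityMeasure μ₁]
    (hμ₀ : ∀ f : C(unitInterval, ℝ), φ f 0 = ∫ t, f t ∂μ₀)
    (hμ₁ : ∀ f : C(unitInterval, ℝ), φ f 1 = ∫ t, f t ∂μ₁)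
    (n : ℕ) (hn : 2 ≤ n) (X : Fin n → Set unitInterval)
    (hmeas : ∀ i, MeasurableSet (X i))
    (hconn : ∀ i, IsConnected (X i))
    (hdisj : Pairwise (Function.onFun Disjoint X))
    (hcover : ⋃ i, X i = Set.univ)
    (h0 : (0 : unitInterval) ∈ X ⟨0, by omega⟩)
    (h1 : (1 : unitInterval) ∈ X ⟨n - 1, by omega⟩) :
    (μ₀ (X ⟨0, by omega⟩)).toReal =
      (b : ℝ) / ((b : ℝ) + (k : ℝ)) * (μ₁ (X ⟨0, by omega⟩)).toReal +
        ((a : ℝ) + (k : ℝ)) / ((b : ℝ) + (k : ℝ)) ∧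
    (μ₀ (X ⟨n - 1, by omega⟩)).toReal =
      (b : ℝ) / ((b : ℝ) + (k : ℝ)) * (μ₁ (X ⟨n - 1, by omega⟩)).toReal -
        (a : ℝ) / ((b : ℝ) + (k : ℝ)) := by
  classical
  set c : ℝ := (a : ℝ) / ((a : ℝ) + (k : ℝ)) with hc_def
  set d : ℝ := (b : ℝ) / ((b : ℝ) + (k : ℝ)) with hd_def
  have hak : (0:ℝ) < (a : ℝ) + (k : ℝ) := by positivity
  have hbk : (0:ℝ) < (b : ℝ) + (k : ℝ) := by positivity
  have hc1 : c < 1 := by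
    rw [hc_def, div_lt_one hak]
    have : (0:ℝ) < (k:ℝ) := by exact_mod_cast hk
    linarith
  have hc0 : 0 ≤ c := by positivity
  have hd0 : 0 ≤ d := by positivity
  set lam : ℝ := ((a : ℝ) + (k : ℝ)) / ((b : ℝ) + (k : ℝ)) with hlam_def
  have hlam0 : 0 ≤ lam := by positivity
  -- the auxiliary function e with e 0 = 1, e 1 = 0
  set e : C(unitInterval, ℝ) := (1 : C(unitInterval, ℝ)) - ⟨fun x => (x : ℝ), continuous_subtype_val⟩ with he_def
  have he0 : e 0 = 1 := by simp [he_def]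
  have he1 : e 1 = 0 := by simp [he_def]
  set lam' : ℝ := φ e 0 - d * φ e 1 with hlam'_def
  -- key functional identity
  have hkey : ∀ f : C(unitInterval, ℝ), φ f 0 - d * φ f 1 = (f 0 - c * f 1) * lam' := by
    intro f
    set g : C(unitInterval, ℝ) := f - (f 0 - c * f 1) • e with hg_def
    have hg1 : g 1 = f 1 := by simp [hg_def, he1]
    have hg0 : g 0 = c * g 1 := by
      simp only [hg_def, ContinuousMap.sub_apply, ContinuousMap.smul_apply, smul_eq_mul,
        he0, he1, mul_one, mul_zero, sub_zero]
      ring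
    have := hsub g hg0
    rw [hg_def] at this
    simp only [map_sub, LinearMap.map_smul, ContinuousMap.sub_apply, ContinuousMap.smul_apply,
      smul_eq_mul] at this
    rw [hlam'_def]
    linear_combination this
  have hlam'_eq : lam' = lam := by
    have h1' := hkey 1
    rw [hunital] at h1'
    simp only [ContinuousMap.one_apply] at h1'
    have hck : 1 - c = (k : ℝ) / ((a : ℝ) + (k : ℝ)) := by
      rw [hc_def]; field_simp; ring
    have hdk : 1 - d = (k : ℝ) / ((b : ℝ) + (k : ℝ)) := by
      rw [hd_def]; field_simp; ring
    have hkpos : (0:ℝ) < (k:ℝ) := by exact_mod_cast hk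
    rw [mul_one, mul_one] at h1'
    -- h1' : 1 - d = (1 - c) * lam'
    have hcne : 1 - c ≠ 0 := by linarith
    have hl : lam' = (1 - d) / (1 - c) := by
      field_simp
      linarith [h1']
    rw [hl, hlam_def, hck, hdk]
    have hkne : (k:ℝ) ≠ 0 := by positivity
    field_simp
  -- integral identity
  have hint : ∀ f : C(unitInterval, ℝ),
      (∫ t, f t ∂μ₀) + (lam * c) * f 1 = d * (∫ t, f t ∂μ₁) + lam * f 0 := by
    intro f
    have := hkey f
    rw [hμ₀ f, hμ₁ f, hlam'_eq] at this
    linear_combination this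
  -- measure identity
  set ν₁ : Measure unitInterval := μ₀ + ENNReal.ofReal (lam * c) • Measure.dirac 1 with hν₁
  set ν₂ : Measure unitInterval :=
    ENNReal.ofReal d • μ₁ + ENNReal.ofReal lam • Measure.dirac 0 with hν₂
  have hfin₁ : IsFiniteMeasure ν₁ := by
    constructor
    rw [hν₁]
    simp [Measure.add_apply]
  have hfin₂ : IsFiniteMeasure ν₂ := by
    constructor
    rw [hν₂]
    simp [Measure.add_apply]
  have hmeq : ν₁ = ν₂ := by
    refine @MeasureTheory.ext_of_forall_lintegral_eq_of_IsFiniteMeasure _ _ _ _ _ ν₁ ν₂ hfin₁ ?_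
    intro f
    have hfc : Continuous fun x : unitInterval => ((f x : ℝ)) :=
      NNReal.continuous_coe.comp f.continuous
    have hi0 : ∫⁻ x, (f x : ℝ≥0∞) ∂μ₀ = ENNReal.ofReal (∫ t, (f t : ℝ) ∂μ₀) := by
      rw [← BoundedContinuousFunction.toReal_lintegral_coe_eq_integral f μ₀,
        ENNReal.ofReal_toReal (BoundedContinuousFunction.lintegral_lt_top_of_nnreal μ₀ f).ne]
    have hi1 : ∫⁻ x, (f x : ℝ≥0∞) ∂μ₁ = ENNReal.ofReal (∫ t, (f t : ℝ) ∂μ₁) := by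
      rw [← BoundedContinuousFunction.toReal_lintegral_coe_eq_integral f μ₁,
        ENNReal.ofReal_toReal (BoundedContinuousFunction.lintegral_lt_top_of_nnreal μ₁ f).ne]
    have hd1 : ∫⁻ x, (f x : ℝ≥0∞) ∂(Measure.dirac (1 : unitInterval))
        = ENNReal.ofReal ((f 1 : ℝ)) := by
      rw [lintegral_dirac, ENNReal.ofReal_coe_nnreal]
    have hd0' : ∫⁻ x, (f x : ℝ≥0∞) ∂(Measure.dirac (0 : unitInterval))
        = ENNReal.ofReal ((f 0 : ℝ)) := by
      rw [lintegral_dirac, ENNReal.ofReal_coe_nnreal]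
    have hInt0 : 0 ≤ ∫ t, (f t : ℝ) ∂μ₀ := integral_nonneg fun x => (f x).coe_nonneg
    have hInt1 : 0 ≤ ∫ t, (f t : ℝ) ∂μ₁ := integral_nonneg fun x => (f x).coe_nonneg
    rw [hν₁, hν₂]
    rw [lintegral_add_measure, lintegral_add_measure, lintegral_smul_measure,
      lintegral_smul_measure, lintegral_smul_measure, hi0, hi1, hd0', hd1]
    rw [smul_eq_mul, smul_eq_mul, smul_eq_mul, ← ENNReal.ofReal_mul hlam0, ← ENNReal.ofReal_mul (by positivity : (0:ℝ) ≤ lam * c),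
      ← ENNReal.ofReal_mul hd0]
    rw [← ENNReal.ofReal_add hInt0 (mul_nonneg (by positivity) (f 1).coe_nonneg),
      ← ENNReal.ofReal_add (mul_nonneg hd0 hInt1) (mul_nonneg hlam0 (f 0).coe_nonneg)]
    refine congrArg ENNReal.ofReal ?_
    have hFi := hint ⟨fun x => (f x : ℝ), hfc⟩
    simp only [ContinuousMap.coe_mk] at hFi
    linarith [hFi]
  -- indices distinct, so 1 ∉ X 0 and 0 ∉ X (n-1)
  have hne : (⟨0, by omega⟩ : Fin n) ≠ ⟨n - 1, by omega⟩ := by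
    intro h
    have := congrArg Fin.val h
    simp at this
    omega
  have hdisj01 := hdisj hne
  have h1notin : (1 : unitInterval) ∉ X ⟨0, by omega⟩ := fun hmem =>
    (Set.disjoint_left.mp hdisj01 hmem) h1
  have h0notin : (0 : unitInterval) ∉ X ⟨n - 1, by omega⟩ := fun hmem =>
    (Set.disjoint_left.mp (hdisj hne.symm) hmem) h0
  -- evaluate the measure identity on the two sets
  have happ : ∀ i : Fin n,
      μ₀ (X i) + ENNReal.ofReal (lam * c) * (Measure.dirac (1 : unitInterval)) (X i)
        = ENNReal.ofReal d * μ₁ (X i)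
          + ENNReal.ofReal lam * (Measure.dirac (0 : unitInterval)) (X i) := by
    intro i
    have := congrArg (fun ν : Measure unitInterval => ν (X i)) hmeq
    simpa [hν₁, hν₂, Measure.add_apply, Measure.smul_apply, smul_eq_mul] using this
  have hdirac1 : ∀ i : Fin n, (Measure.dirac (1 : unitInterval)) (X i)
      = Set.indicator (X i) 1 (1 : unitInterval) := fun i => Measure.dirac_apply' _ (hmeas i)
  have hdirac0 : ∀ i : Fin n, (Measure.dirac (0 : unitInterval)) (X i)
      = Set.indicator (X i) 1 (0 : unitInterval) := fun i => Measure.dirac_apply' _ (hmeas i)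
  constructor
  · have h := happ ⟨0, by omega⟩
    rw [hdirac1, hdirac0] at h
    rw [Set.indicator_of_notMem h1notin, Set.indicator_of_mem h0] at h
    simp only [mul_zero, add_zero, Pi.one_apply, mul_one] at h
    have := congrArg ENNReal.toReal h
    rw [ENNReal.toReal_add (by finiteness) (by finiteness),
      ENNReal.toReal_mul, ENNReal.toReal_ofReal hd0, ENNReal.toReal_ofReal hlam0] at this
    rw [this, hlam_def]
  · have h := happ ⟨n - 1, by omega⟩
    rw [hdirac1, hdirac0] at h
    rw [Set.indicator_of_mem h1, Set.indicator_of_notMem h0notin] at h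
    simp only [mul_zero, add_zero, Pi.one_apply, mul_one] at h
    have := congrArg ENNReal.toReal h
    rw [ENNReal.toReal_add (by finiteness) (by finiteness),
      ENNReal.toReal_mul, ENNReal.toReal_ofReal hd0,
      ENNReal.toReal_ofReal (by positivity : (0:ℝ) ≤ lam * c)] at this
    have hlc : lam * c = (a : ℝ) / ((b : ℝ) + (k : ℝ)) := by
      rw [hlam_def, hc_def]
      field_simp
    rw [hlc] at this
    linarith [this]
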